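/- arXiv:math/0302090 — 3 statements merged into one kernel-verified Lean document; each statement's English description precedes it below -/
import Mathlib

section
/- Let h be a function holomorphic on the half-plane {z ∈ ℂ : Re(z) > 0} such that h(n) = 0 for every positive integer n. If there exist constants K and m with |h(z)| ≤ K e^{m Re(z)} for all z with Re(z) > 0, then h is identically zero on the half-plane. -/
open Complex

open Finset Filter

noncomputable def CVFiter (g : ℂ → ℂ) : ℕ → ℂ → ℂ
  | 0 => g
  | (k+1) => dslope (CVFiter g k) ((k+1 : ℕ) : ℂ)

lemma CVFiter_diff {g : ℂ → ℂ} (hg : DifferentiableOn ℂ g {z : ℂ | 0 < z.re}) :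
    ∀ k, DifferentiableOn ℂ (CVFiter g k) {z : ℂ | 0 < z.re} := by
  intro k
  induction k with
  | zero => exact hg
  | succ k ih =>
    show DifferentiableOn ℂ (dslope (CVFiter g k) ((k+1 : ℕ) : ℂ)) {z : ℂ | 0 < z.re}
    rw [Complex.differentiableOn_dslope]
    · exact ih
    · refine (isOpen_lt continuous_const Complex.continuous_re).mem_nhds ?_
      simp only [Set.mem_setOf_eq, natCast_re]
      positivity

lemma CVFiter_eq {g : ℂ → ℂ} : ∀ (k : ℕ), (∀ n ∈ Finset.Icc 1 k, g ((n:ℕ) : ℂ) = 0) →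
    ∀ z : ℂ, (∀ n ∈ Finset.Icc 1 k, z ≠ ((n:ℕ) : ℂ)) →
    CVFiter g k z = g z / ∏ n ∈ Finset.Icc 1 k, (z - (n : ℂ)) := by
  intro k
  induction k with
  | zero => intro _ z _; simp [CVFiter]
  | succ k ih =>
    intro hz0 z hzne
    have hmem : (k+1) ∈ Finset.Icc 1 (k+1) := by simp
    have h1 : ∀ n ∈ Finset.Icc 1 k, g ((n:ℕ):ℂ) = 0 := fun n hn => hz0 n (by
      simp only [Finset.mem_Icc] at *; omega)
    have hne : z ≠ ((k+1 : ℕ) : ℂ) := hzne (k+1) hmem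
    have hcast : ∀ n ∈ Finset.Icc 1 k, ((k+1:ℕ) : ℂ) ≠ ((n:ℕ) : ℂ) := by
      intro n hn hE
      simp only [Finset.mem_Icc] at hn
      have := Nat.cast_inj (R := ℂ).mp hE
      omega
    have hFk1 : CVFiter g k ((k+1:ℕ) : ℂ) = 0 := by
      rw [ih h1 _ hcast, hz0 (k+1) hmem, zero_div]
    show dslope (CVFiter g k) ((k+1 : ℕ) : ℂ) z = _
    rw [dslope_of_ne _ hne, slope_def_field, hFk1, sub_zero,
      ih h1 z (fun n hn => hzne n (by simp only [Finset.mem_Icc] at *; omega)),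
      Finset.prod_Icc_succ_top (by omega : 1 ≤ k + 1)]
    rw [div_div]

-- boundary factor bound on line Re z = ε
lemma CV_line_bound {z : ℂ} {ε : ℝ} (hre : z.re = ε) (hε : 0 < ε) (hε2 : ε ≤ 1/2)
    {n : ℕ} (hn : 1 ≤ n) :
    ‖z + n‖ ≤ Real.exp (8 * ε) * ‖z - n‖ := by
  have hn' : (1:ℝ) ≤ n := by exact_mod_cast hn
  have h1 : ‖z + n‖ ^ 2 = (ε + n)^2 + z.im^2 := by
    rw [Complex.sq_norm, Complex.normSq_apply]
    simp [hre]; ring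
  have h2 : ‖z - n‖ ^ 2 = (ε - n)^2 + z.im^2 := by
    rw [Complex.sq_norm, Complex.normSq_apply]
    simp [hre]; ring
  have key : ‖z + n‖ ^ 2 ≤ (Real.exp (8*ε) * ‖z - n‖)^2 := by
    rw [mul_pow, h1, h2]
    have he : Real.exp (8*ε) ^ 2 = Real.exp (16 * ε) := by
      rw [← Real.exp_nat_mul]; ring_nf
    rw [he]
    have hle : 1 + 16 * ε ≤ Real.exp (16 * ε) := by
      have := Real.add_one_le_exp (16 * ε); linarith
    have him : (0:ℝ) ≤ z.im ^ 2 := sq_nonneg _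
    have hD : (0:ℝ) ≤ (ε - n)^2 + z.im^2 := by positivity
    have step1 : (ε + n)^2 + z.im^2 ≤ (1 + 16*ε) * ((ε - n)^2 + z.im^2) := by
      have hkey : (0:ℝ) ≤ 4*(ε - n)^2 - n := by
        nlinarith [mul_nonneg (by linarith : (0:ℝ) ≤ 1/2 - ε)
          (by linarith : (0:ℝ) ≤ 2*(n:ℝ) - ε - 1/2),
          mul_nonneg (by linarith : (0:ℝ) ≤ 4*(n:ℝ)-1) (by linarith : (0:ℝ) ≤ (n:ℝ)-1)]
      nlinarith [mul_nonneg hε.le hkey, mul_nonneg hε.le him]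
    calc (ε + n)^2 + z.im^2 ≤ (1 + 16*ε) * ((ε - n)^2 + z.im^2) := step1
      _ ≤ Real.exp (16*ε) * ((ε - n)^2 + z.im^2) := by
          exact mul_le_mul_of_nonneg_right hle hD
  calc ‖z + n‖ = Real.sqrt (‖z + n‖ ^ 2) := by
        rw [Real.sqrt_sq (norm_nonneg _)]
    _ ≤ Real.sqrt ((Real.exp (8*ε) * ‖z - n‖)^2) := Real.sqrt_le_sqrt key
    _ = _ := Real.sqrt_sq (by positivity)

lemma CV_factor_le_one {z : ℂ} (hz : 0 < z.re) (n : ℕ) :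
    ‖z - n‖ ≤ ‖z + n‖ := by
  have key : ‖z - n‖ ^ 2 ≤ ‖z + n‖ ^ 2 := by
    rw [Complex.sq_norm, Complex.sq_norm, Complex.normSq_apply, Complex.normSq_apply]
    simp only [Complex.add_re, Complex.add_im, Complex.sub_re, Complex.sub_im,
      Complex.natCast_re, Complex.natCast_im]
    nlinarith [mul_nonneg hz.le (Nat.cast_nonneg (α := ℝ) n)]
  calc ‖z - n‖ = Real.sqrt (‖z - n‖ ^ 2) := by
        rw [Real.sqrt_sq (norm_nonneg _)]
    _ ≤ Real.sqrt (‖z + n‖ ^ 2) := Real.sqrt_le_sqrt key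
    _ = _ := Real.sqrt_sq (norm_nonneg _)

lemma CV_factor_decay {z : ℂ} (hz : 0 < z.re) {n : ℕ} (hn : 1 ≤ n)
    (h1 : z.re ≤ n) (h2 : |z.im| ≤ n) :
    ‖z - n‖ ≤ Real.exp (-(2*z.re/5) * (1/n)) * ‖z + n‖ := by
  have hn' : (1:ℝ) ≤ n := by exact_mod_cast hn
  have hnpos : (0:ℝ) < n := by linarith
  have key : ‖z - n‖ ^ 2
      ≤ (Real.exp (-(2*z.re/5) * (1/n)) * ‖z + n‖) ^ 2 := by
    rw [mul_pow, Complex.sq_norm, Complex.sq_norm, Complex.normSq_apply, Complex.normSq_apply]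
    simp only [Complex.add_re, Complex.add_im, Complex.sub_re, Complex.sub_im,
      Complex.natCast_re, Complex.natCast_im]
    have he : Real.exp (-(2*z.re/5) * (1/n)) ^ 2 = Real.exp (-(4*z.re/5) * (1/n)) := by
      rw [← Real.exp_nat_mul]; ring_nf
    rw [he]
    have hle : 1 + (-(4*z.re/5) * (1/n)) ≤ Real.exp (-(4*z.re/5) * (1/n)) := by
      have := Real.add_one_le_exp (-(4*z.re/5) * (1/n)); linarith
    have hA : (0:ℝ) ≤ (z.re + n)*(z.re + n) + z.im*z.im := by nlinarith
    have him2 : z.im^2 ≤ (n:ℝ)^2 := by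
      have := _root_.sq_abs z.im
      nlinarith [abs_nonneg z.im]
    have hkey : (0:ℝ) ≤ 4*z.re/5 * (5*(n:ℝ)^2 - (z.re+n)^2 - z.im^2) := by
      apply mul_nonneg (by positivity)
      nlinarith [sq_nonneg (z.re - n)]
    have hrw : 1 + (-(4*z.re/5) * (1/(n:ℝ))) = (5*n - 4*z.re)/(5*n) := by
      field_simp; ring
    have step1 : (z.re - n)*(z.re - n) + z.im*(z.im - 0) ≤
        (1 + (-(4*z.re/5) * (1/n))) * ((z.re + n)*(z.re + n) + z.im*z.im) := by
      rw [hrw, div_mul_eq_mul_div, le_div_iff₀ (by positivity : (0:ℝ) < 5*n)]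
      nlinarith [hkey]
    calc (z.re - n)*(z.re - n) + (z.im - 0)*(z.im - 0)
        ≤ (1 + (-(4*z.re/5) * (1/n))) * ((z.re + n)*(z.re + n) + z.im*z.im) := by
          nlinarith [step1]
      _ ≤ Real.exp (-(4*z.re/5) * (1/n)) * ((z.re + n)*(z.re + n) + (z.im + 0)*(z.im + 0)) := by
          nlinarith [mul_le_mul_of_nonneg_right hle hA]
  calc ‖z - n‖ = Real.sqrt (‖z - n‖ ^ 2) := by
        rw [Real.sqrt_sq (norm_nonneg _)]
    _ ≤ Real.sqrt ((Real.exp (-(2*z.re/5) * (1/n)) * ‖z + n‖) ^ 2) :=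
        Real.sqrt_le_sqrt key
    _ = _ := Real.sqrt_sq (by positivity)

lemma CV_far_bound {z : ℂ} {k n : ℕ} (hn : n ∈ Finset.Icc 1 k)
    (hz : 2*(k:ℝ) + 2 ≤ ‖z‖) :
    ‖z + n‖ ≤ 3 * ‖z - n‖ := by
  simp only [Finset.mem_Icc] at hn
  have hnk : (n:ℝ) ≤ k := by exact_mod_cast hn.2
  have h1 : ‖z + n‖ ≤ ‖z‖ + n := by
    simpa using norm_add_le z n
  have h2 : ‖z‖ - n ≤ ‖z - n‖ := by
    have := norm_sub_norm_le z (n : ℂ)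
    simpa using this
  nlinarith

lemma CV_harmonic_Ioc (j₀ : ℕ) :
    Tendsto (fun k : ℕ => ∑ n ∈ Finset.Ioc j₀ k, (1/(n:ℝ))) atTop atTop := by
  have hH : Tendsto (fun k : ℕ => ∑ n ∈ Finset.Ioc 0 k, (1/(n:ℝ))) atTop atTop := by
    have : ∀ k : ℕ, ∑ n ∈ Finset.Ioc 0 k, (1/(n:ℝ)) = ∑ i ∈ Finset.range k, 1/((i:ℝ)+1) := by
      intro k
      rw [← Finset.Ico_add_one_add_one_eq_Ioc, Finset.sum_Ico_eq_sum_range]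
      simp [add_comm]
    rw [funext this]
    exact Real.tendsto_sum_range_one_div_nat_succ_atTop
  have key : ∀ᶠ k in atTop, ∑ n ∈ Finset.Ioc j₀ k, (1/(n:ℝ)) =
      (∑ n ∈ Finset.Ioc 0 k, (1/(n:ℝ))) + -(∑ n ∈ Finset.Ioc 0 j₀, (1/(n:ℝ))) := by
    filter_upwards [eventually_ge_atTop j₀] with k hk
    rw [← Finset.sum_Ioc_consecutive _ (Nat.zero_le j₀) hk]
    ring
  exact (tendsto_atTop_add_const_right _ _ hH).congr' (Filter.EventuallyEq.symm key)

lemma CV_prod_tendsto {z : ℂ} (hz : 0 < z.re) :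
    Tendsto (fun k : ℕ => ∏ n ∈ Finset.Icc 1 k, (‖z - (n:ℂ)‖ / ‖z + (n:ℂ)‖))
      atTop (nhds 0) := by
  set c : ℝ := 2*z.re/5 with hc
  have hcpos : 0 < c := by positivity
  set j₀ : ℕ := max 1 ⌈max z.re |z.im|⌉₊ with hj₀
  have hj₀re : z.re ≤ j₀ := le_trans (le_max_left _ _) (le_trans (Nat.le_ceil _)
    (by exact_mod_cast Nat.cast_le.mpr (le_max_right 1 _)))
  have hj₀im : |z.im| ≤ j₀ := le_trans (le_max_right z.re _) (le_trans (Nat.le_ceil _)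
    (by exact_mod_cast Nat.cast_le.mpr (le_max_right 1 _)))
  have habs : ∀ n : ℕ, 0 < ‖z + n‖ := by
    intro n
    have : (z + n).re ≠ 0 := by
      simp only [Complex.add_re, Complex.natCast_re]
      positivity
    have hne : z + n ≠ 0 := fun hE => this (by rw [hE]; simp)
    exact norm_pos_iff.mpr hne
  have hfnonneg : ∀ n : ℕ, 0 ≤ ‖z - n‖ / ‖z + n‖ := by
    intro n; positivity
  have hfle1 : ∀ n : ℕ, ‖z - n‖ / ‖z + n‖ ≤ 1 := by
    intro n
    rw [div_le_one (habs n)]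
    exact CV_factor_le_one hz n
  apply squeeze_zero' (Filter.Eventually.of_forall fun k => Finset.prod_nonneg
    (fun n _ => hfnonneg n))
    (g := fun k : ℕ => Real.exp (-c * ∑ n ∈ Finset.Ioc j₀ k, (1/(n:ℝ))))
  · filter_upwards [eventually_ge_atTop j₀] with k hk
    have hsplit : ∏ n ∈ Finset.Icc 1 k, (‖z - n‖ / ‖z + n‖) =
        (∏ n ∈ Finset.Ioc 0 j₀, (‖z - n‖ / ‖z + n‖)) *
        ∏ n ∈ Finset.Ioc j₀ k, (‖z - n‖ / ‖z + n‖) := by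
      rw [Finset.prod_Ioc_consecutive _ (Nat.zero_le j₀) hk]
      congr 1
    rw [hsplit]
    have h1 : (∏ n ∈ Finset.Ioc 0 j₀, (‖z - n‖ / ‖z + n‖)) ≤ 1 :=
      Finset.prod_le_one (fun n _ => hfnonneg n) (fun n _ => hfle1 n)
    have h2 : (∏ n ∈ Finset.Ioc j₀ k, (‖z - n‖ / ‖z + n‖))
        ≤ Real.exp (-c * ∑ n ∈ Finset.Ioc j₀ k, (1/(n:ℝ))) := by
      rw [Finset.mul_sum, Real.exp_sum]
      apply Finset.prod_le_prod (fun n _ => hfnonneg n)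
      intro n hn
      simp only [Finset.mem_Ioc] at hn
      have hn1 : 1 ≤ n := by omega
      have h1n : z.re ≤ n := hj₀re.trans (by exact_mod_cast Nat.cast_le.mpr hn.1.le)
      have h2n : |z.im| ≤ n := hj₀im.trans (by exact_mod_cast Nat.cast_le.mpr hn.1.le)
      rw [div_le_iff₀ (habs n)]
      have := CV_factor_decay hz hn1 h1n h2n
      calc ‖z - n‖ ≤ Real.exp (-(2*z.re/5) * (1/n)) * ‖z + n‖ := this
        _ = Real.exp (-c * (1/n)) * ‖z + n‖ := by rw [hc]
    calc _ ≤ 1 * Real.exp (-c * ∑ n ∈ Finset.Ioc j₀ k, (1/(n:ℝ))) := by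
          apply mul_le_mul h1 h2 (Finset.prod_nonneg fun n _ => hfnonneg n) zero_le_one
      _ = _ := one_mul _
  · apply Real.tendsto_exp_atBot.comp
    exact (tendsto_const_nhds (x := -c)).neg_mul_atTop (by linarith) (CV_harmonic_Ioc j₀)

lemma CV_key {g : ℂ → ℂ} (hgd : DifferentiableOn ℂ g {z : ℂ | 0 < z.re})
    (hgz : ∀ n : ℕ, 0 < n → g (n : ℂ) = 0) {K : ℝ} (hK : 0 ≤ K)
    (hgb : ∀ z : ℂ, 0 < z.re → ‖g z‖ ≤ K) (k : ℕ) {ε : ℝ}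
    (hε : 0 < ε) (hε2 : ε ≤ 1/2) {z : ℂ} (hz : ε ≤ z.re) :
    ‖CVFiter g k z * ∏ n ∈ Finset.Icc 1 k, (z + (n:ℂ))‖ ≤ K * Real.exp (8*ε*k) := by
  set Q : ℂ → ℂ := fun w => CVFiter g k w * ∏ n ∈ Finset.Icc 1 k, (w + (n:ℂ)) with hQ
  have hgz' : ∀ n ∈ Finset.Icc 1 k, g ((n:ℕ) : ℂ) = 0 := fun n hn =>
    hgz n (by simp only [Finset.mem_Icc] at hn; omega)
  have hQd : DifferentiableOn ℂ Q {z : ℂ | 0 < z.re} := by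
    apply (CVFiter_diff hgd k).mul
    exact (by fun_prop : Differentiable ℂ (fun w : ℂ => ∏ n ∈ Finset.Icc 1 k, (w + (n:ℂ)))).differentiableOn
  -- norm formula away from the integers
  have habs_sub : ∀ (w : ℂ) (n : ℕ), w ≠ (n : ℂ) → 0 < ‖w - n‖ := by
    intro w n hw
    exact norm_pos_iff.mpr (sub_ne_zero.mpr hw)
  have hQnorm : ∀ w : ℂ, (∀ n ∈ Finset.Icc 1 k, w ≠ ((n:ℕ) : ℂ)) →
      ‖Q w‖ = ‖g w‖ * ∏ n ∈ Finset.Icc 1 k, (‖w + n‖ / ‖w - n‖) := by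
    intro w hw
    rw [hQ]
    simp only
    rw [CVFiter_eq k hgz' w hw]
    rw [Finset.prod_div_distrib, norm_mul, norm_div]
    have h1 : ‖∏ n ∈ Finset.Icc 1 k, (w - (n:ℂ))‖ = ∏ n ∈ Finset.Icc 1 k, ‖w - n‖ := by
      exact norm_prod _ _
    have h2 : ‖∏ n ∈ Finset.Icc 1 k, (w + (n:ℂ))‖ = ∏ n ∈ Finset.Icc 1 k, ‖w + n‖ := by
      exact norm_prod _ _
    rw [h1, h2]
    ring
  -- global bound on {w | ε ≤ w.re}
  have hVsub : {w : ℂ | ε ≤ w.re} ⊆ {w : ℂ | 0 < w.re} := fun w hw => lt_of_lt_of_le hε hw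
  obtain ⟨Cc, hCc⟩ : ∃ C, ∀ w ∈ ({w : ℂ | ε ≤ w.re} ∩ Metric.closedBall 0 (2*k+2)),
      ‖Q w‖ ≤ C := by
    apply ((isCompact_closedBall (0:ℂ) (2*k+2)).inter_left
      (isClosed_le continuous_const Complex.continuous_re)).exists_bound_of_continuousOn
    exact hQd.continuousOn.mono (fun w hw => hVsub hw.1)
  set C' : ℝ := max Cc (K * 3^k) with hC'
  have hC'bound : ∀ w : ℂ, ε ≤ w.re → ‖Q w‖ ≤ C' := by
    intro w hw
    rcases le_or_gt (‖w‖) (2*k+2) with hball | hfar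
    · refine le_trans (hCc w ⟨hw, ?_⟩) (le_max_left _ _)
      simpa [Complex.dist_eq] using hball
    · have hwne : ∀ n ∈ Finset.Icc 1 k, w ≠ ((n:ℕ) : ℂ) := by
        intro n hn hE
        simp only [Finset.mem_Icc] at hn
        rw [hE] at hfar
        have : ‖((n:ℕ) : ℂ)‖ = n := by
          rw [Complex.norm_natCast]
        rw [this] at hfar
        have : (n:ℝ) ≤ k := by exact_mod_cast hn.2
        linarith
      rw [hQnorm w hwne]
      refine le_trans ?_ (le_max_right _ _)
      have hprod : (∏ n ∈ Finset.Icc 1 k, (‖w + n‖ / ‖w - n‖))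
          ≤ 3^k := by
        calc (∏ n ∈ Finset.Icc 1 k, (‖w + n‖ / ‖w - n‖))
            ≤ ∏ _n ∈ Finset.Icc 1 k, (3:ℝ) := by
              apply Finset.prod_le_prod (fun n _ => by positivity)
              intro n hn
              rw [div_le_iff₀ (habs_sub w n (hwne n hn))]
              have := CV_far_bound hn hfar.le
              linarith
          _ = 3^k := by rw [Finset.prod_const, Nat.card_Icc]; simp
      have hgw : ‖g w‖ ≤ K := hgb w (lt_of_lt_of_le hε hw)
      exact mul_le_mul hgw hprod (Finset.prod_nonneg (fun n _ => by positivity)) hK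
  -- the shifted function
  set G := fun w : ℂ => Q (w + (ε:ℂ)) with hG
  have hGd : DifferentiableOn ℂ G {w : ℂ | -ε < w.re} := by
    apply DifferentiableOn.comp hQd ((differentiable_id.add_const _).differentiableOn)
    intro w hw
    simp only [Set.mem_setOf_eq] at *
    simp only [id_eq, Complex.add_re, Complex.ofReal_re]
    linarith
  have hd : DiffContOnCl ℂ G {w : ℂ | 0 < w.re} := by
    refine ⟨hGd.mono (fun w hw => ?_), (hGd.continuousOn).mono (fun w hw => ?_)⟩
    · simp only [Set.mem_setOf_eq] at *; linarith
    · rw [closure_setOf_lt_re] at hw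
      simp only [Set.mem_setOf_eq] at *; linarith
  have him : ∀ y : ℝ, ‖G ((y:ℂ) * I)‖ ≤ K * Real.exp (8*ε*k) := by
    intro y
    set w : ℂ := (y:ℂ) * I + (ε:ℂ) with hw
    have hwre : w.re = ε := by simp [hw]
    have hwne : ∀ n ∈ Finset.Icc 1 k, w ≠ ((n:ℕ) : ℂ) := by
      intro n hn hE
      simp only [Finset.mem_Icc] at hn
      have : w.re = n := by rw [hE]; simp
      rw [hwre] at this
      have hn1 : (1:ℝ) ≤ n := by exact_mod_cast hn.1
      linarith
    have : G ((y:ℂ) * I) = Q w := rfl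
    rw [this, hQnorm w hwne]
    have hgw : ‖g w‖ ≤ K := hgb w (by rw [hwre]; exact hε)
    have hprod : (∏ n ∈ Finset.Icc 1 k, (‖w + n‖ / ‖w - n‖))
        ≤ Real.exp (8*ε*k) := by
      calc (∏ n ∈ Finset.Icc 1 k, (‖w + n‖ / ‖w - n‖))
          ≤ ∏ _n ∈ Finset.Icc 1 k, Real.exp (8*ε) := by
            apply Finset.prod_le_prod (fun n _ => by positivity)
            intro n hn
            rw [div_le_iff₀ (habs_sub w n (hwne n hn))]
            exact CV_line_bound hwre hε hε2 (by simp only [Finset.mem_Icc] at hn; omega)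
        _ = Real.exp (8*ε*k) := by
            rw [Finset.prod_const, Nat.card_Icc, ← Real.exp_nat_mul]
            simp [mul_comm]
    exact mul_le_mul hgw hprod (Finset.prod_nonneg (fun n _ => by positivity)) hK
  have key := PhragmenLindelof.right_half_plane_of_bounded_on_real (f := G)
    (C := K * Real.exp (8*ε*k)) (z := z - (ε:ℂ)) hd
    ⟨1, one_lt_two, 0, by
      apply Asymptotics.IsBigO.of_bound C'
      rw [Filter.eventually_inf_principal]
      apply Filter.Eventually.of_forall
      intro w hw
      simp only [Set.mem_setOf_eq] at hw
      have h1 : ‖G w‖ ≤ C' := hC'bound (w + ε) (by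
        simp only [Complex.add_re, Complex.ofReal_re]; linarith)
      have h2 : ‖Real.exp (0 * ‖w‖ ^ (1:ℝ))‖ = 1 := by simp
      rw [h2, mul_one]
      exact h1⟩
    (Filter.isBoundedUnder_of_eventually_le (a := C') (by
      filter_upwards [Filter.eventually_ge_atTop (0:ℝ)] with x hx
      exact hC'bound ((x:ℂ) + ε) (by
        simp only [Complex.add_re, Complex.ofReal_re]; linarith)))
    him
    (by simp only [Complex.sub_re, Complex.ofReal_re]; linarith)
  have : G (z - (ε:ℂ)) = Q z := by rw [hG]; simp
  rw [this] at key
  exact key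


/-- Corollary of Carleson's theorem: a function holomorphic on the right half-plane,
bounded by `K e^{m Re z}`, which vanishes at every positive integer, vanishes identically
on the half-plane. -/
theorem carleson_vanishing
    (h : ℂ → ℂ) (hd : DifferentiableOn ℂ h {z : ℂ | 0 < z.re})
    (hzero : ∀ n : ℕ, 0 < n → h (n : ℂ) = 0)
    (K m : ℝ) (hb : ∀ z : ℂ, 0 < z.re → ‖h z‖ ≤ K * Real.exp (m * z.re)) :
    ∀ z : ℂ, 0 < z.re → h z = 0 := by
  intro z hzre
  by_cases hint : ∃ n : ℕ, 0 < n ∧ z = (n:ℂ)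
  · obtain ⟨n, hn, rfl⟩ := hint
    exact hzero n hn
  push_neg at hint
  set g : ℂ → ℂ := fun w => Complex.exp (-(m:ℂ) * w) * h w with hg
  have hgd : DifferentiableOn ℂ g {z : ℂ | 0 < z.re} :=
    ((differentiable_id.const_mul (-(m:ℂ))).cexp.differentiableOn).mul hd
  have hgz : ∀ n : ℕ, 0 < n → g ((n:ℕ) : ℂ) = 0 := by
    intro n hn
    rw [hg]
    simp [hzero n hn]
  have hre1 : ((1:ℂ)).re = 1 := by simp
  have hK : 0 ≤ K := by
    have h1 := hb 1 (by rw [hre1]; norm_num)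
    have h2 := norm_nonneg (h 1)
    nlinarith [Real.exp_pos (m * (1:ℂ).re)]
  have hexpre : ∀ w : ℂ, (-(m:ℂ) * w).re = -(m * w.re) := by
    intro w
    simp [Complex.mul_re]
  have hgb : ∀ w : ℂ, 0 < w.re → ‖g w‖ ≤ K := by
    intro w hw
    rw [hg]
    simp only
    rw [norm_mul, Complex.norm_exp, hexpre w]
    have hmain := hb w hw
    have hepos := Real.exp_pos (-(m * w.re))
    calc Real.exp (-(m * w.re)) * ‖h w‖
        ≤ Real.exp (-(m * w.re)) * (K * Real.exp (m * w.re)) := by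
          exact mul_le_mul_of_nonneg_left hmain hepos.le
      _ = K * (Real.exp (-(m * w.re)) * Real.exp (m * w.re)) := by ring
      _ = K := by rw [← Real.exp_add]; simp
  have hzne : ∀ k : ℕ, ∀ n ∈ Finset.Icc 1 k, z ≠ ((n:ℕ) : ℂ) := by
    intro k n hn
    simp only [Finset.mem_Icc] at hn
    exact hint n (by omega)
  have habs_sub : ∀ n : ℕ, 0 < n → 0 < ‖z - n‖ := by
    intro n hn
    exact norm_pos_iff.mpr (sub_ne_zero.mpr (hint n hn))
  have habs_add : ∀ n : ℕ, 0 < ‖z + n‖ := by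
    intro n
    have : (z + n).re ≠ 0 := by
      simp only [Complex.add_re, Complex.natCast_re]
      positivity
    exact norm_pos_iff.mpr (fun hE => this (by rw [hE]; simp))
  have key : ∀ k : ℕ, 1 ≤ k → ‖g z‖ ≤ K * Real.exp 4 *
      ∏ n ∈ Finset.Icc 1 k, (‖z - (n:ℂ)‖ / ‖z + (n:ℂ)‖) := by
    intro k hk
    have hkR : (1:ℝ) ≤ k := by exact_mod_cast hk
    set ε : ℝ := min (1/(2*k)) z.re with hε
    have hε0 : 0 < ε := lt_min (by positivity) hzre
    have hε2 : ε ≤ 1/2 := le_trans (min_le_left _ _)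
      (by rw [div_le_div_iff₀ (by positivity) (by norm_num)]; nlinarith)
    have hzε : ε ≤ z.re := min_le_right _ _
    have hKey := CV_key hgd hgz hK hgb k hε0 hε2 hzε
    have h4 : 8*ε*(k:ℝ) ≤ 4 := by
      have h1 : ε ≤ 1/(2*(k:ℝ)) := min_le_left _ _
      have h2 : ε * (2*(k:ℝ)) ≤ 1 := by
        rw [← le_div_iff₀ (by positivity : (0:ℝ) < 2*(k:ℝ))]
        exact h1
      nlinarith
    have hexpk : Real.exp (8*ε*k) ≤ Real.exp 4 := Real.exp_le_exp.mpr h4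
    have hgz' : ∀ n ∈ Finset.Icc 1 k, g ((n:ℕ) : ℂ) = 0 := fun n hn =>
      hgz n (by simp only [Finset.mem_Icc] at hn; omega)
    have hQnorm : ‖CVFiter g k z * ∏ n ∈ Finset.Icc 1 k, (z + (n:ℂ))‖ =
        ‖g z‖ * ∏ n ∈ Finset.Icc 1 k, (‖z + n‖ / ‖z - n‖) := by
      rw [CVFiter_eq k hgz' z (hzne k), Finset.prod_div_distrib, norm_mul, norm_div]
      have h1 : ‖∏ n ∈ Finset.Icc 1 k, (z - (n:ℂ))‖
          = ∏ n ∈ Finset.Icc 1 k, ‖z - n‖ := by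
        exact norm_prod _ _
      have h2 : ‖∏ n ∈ Finset.Icc 1 k, (z + (n:ℂ))‖
          = ∏ n ∈ Finset.Icc 1 k, ‖z + n‖ := by
        exact norm_prod _ _
      rw [h1, h2]
      ring
    have hgid : ‖g z‖ = ‖CVFiter g k z * ∏ n ∈ Finset.Icc 1 k, (z + (n:ℂ))‖ *
        ∏ n ∈ Finset.Icc 1 k, (‖z - (n:ℂ)‖ / ‖z + (n:ℂ)‖) := by
      rw [hQnorm, mul_assoc, ← Finset.prod_mul_distrib]
      have : ∀ n ∈ Finset.Icc 1 k,
          (‖z + n‖ / ‖z - n‖) *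
          (‖z - (n:ℂ)‖ / ‖z + (n:ℂ)‖) = 1 := by
        intro n hn
        simp only [Finset.mem_Icc] at hn
        have ha := habs_sub n (by omega)
        have hb' := habs_add n
        field_simp
      rw [Finset.prod_congr rfl this, Finset.prod_const_one, mul_one]
    rw [hgid]
    have hP : 0 ≤ ∏ n ∈ Finset.Icc 1 k,
        (‖z - (n:ℂ)‖ / ‖z + (n:ℂ)‖) :=
      Finset.prod_nonneg (fun n _ => by positivity)
    apply mul_le_mul_of_nonneg_right _ hP
    calc ‖CVFiter g k z * ∏ n ∈ Finset.Icc 1 k, (z + (n:ℂ))‖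
        ≤ K * Real.exp (8*ε*k) := hKey
      _ ≤ K * Real.exp 4 := mul_le_mul_of_nonneg_left hexpk hK
  have hlim : Filter.Tendsto (fun k : ℕ => K * Real.exp 4 *
      ∏ n ∈ Finset.Icc 1 k, (‖z - (n:ℂ)‖ / ‖z + (n:ℂ)‖))
      Filter.atTop (nhds 0) := by
    have := (CV_prod_tendsto hzre).const_mul (K * Real.exp 4)
    simpa using this
  have hgz0 : ‖g z‖ ≤ 0 := by
    apply ge_of_tendsto hlim
    filter_upwards [Filter.eventually_ge_atTop 1] with k hk
    exact key k hk
  have : g z = 0 := by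
    have := le_antisymm hgz0 (norm_nonneg _)
    exact norm_eq_zero.mp this
  rw [hg] at this
  simp only at this
  rcases mul_eq_zero.mp this with hE | hE
  · exact absurd hE (Complex.exp_ne_zero _)
  · exact hE
end

section
/- For every real number a > 0, log a = ∫_0^1 (a−1)/((a−1)t + 1) dt. Consequently, if C ⊆ ℝ^n is a compact set, f is a continuous function on C that is strictly positive μ-almost everywhere and non-negative on C, g is continuous on C, s_0 > 0 is real, and l is a non-negative integer, then ∫_{C × [0,1]^l} f(x)^{s_0} ∏_{i=1}^l [(f(x)−1)/((f(x)−1)t_i + 1)] g(x) dμ(x) dt_1⋯dt_l = ∫_C f(x)^{s_0} (log f(x))^l g(x) dμ(x), with integrands interpreted as 0 where f vanishes. -/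
open MeasureTheory

noncomputable section


lemma denPos {a t : ℝ} (ha : 0 < a) (h0 : 0 ≤ t) (h1 : t ≤ 1) : 0 < (a - 1) * t + 1 := by
  rcases eq_or_lt_of_le h0 with h | h
  · simp [← h]
  · nlinarith [mul_pos ha h]

lemma logIntegral {a : ℝ} (ha : 0 < a) :
    Real.log a = ∫ t in (0 : ℝ)..1, (a - 1) / ((a - 1) * t + 1) := by
  have hI : Set.uIcc (0 : ℝ) 1 = Set.Icc 0 1 := Set.uIcc_of_le zero_le_one
  have hden : ∀ t ∈ Set.uIcc (0 : ℝ) 1, (a - 1) * t + 1 ≠ 0 := by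
    intro t ht
    rw [hI] at ht
    exact (denPos ha ht.1 ht.2).ne'
  have hcont : ContinuousOn (fun t : ℝ => (a - 1) / ((a - 1) * t + 1)) (Set.uIcc 0 1) :=
    ContinuousOn.div continuousOn_const (by fun_prop) hden
  have key := intervalIntegral.integral_eq_sub_of_hasDerivAt
      (f := fun t : ℝ => Real.log ((a - 1) * t + 1))
      (f' := fun t : ℝ => (a - 1) / ((a - 1) * t + 1))
      (fun t ht => ?_) (hcont.intervalIntegrable)
  · rw [key]; norm_num
  · have h1 : HasDerivAt (fun t : ℝ => (a - 1) * t + 1) (a - 1) t := by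
      simpa using ((hasDerivAt_id t).const_mul (a - 1)).add_const 1
    have h2 := (Real.hasDerivAt_log (hden t ht)).comp t h1
    simpa [div_eq_inv_mul, Function.comp_def] using h2

lemma intIcc {a : ℝ} (ha : 0 < a) :
    ∫ t in Set.Icc (0 : ℝ) 1, (a - 1) / ((a - 1) * t + 1) = Real.log a := by
  rw [MeasureTheory.integral_Icc_eq_integral_Ioc,
    ← intervalIntegral.integral_of_le zero_le_one, ← logIntegral ha]

lemma intIccAbs {a : ℝ} (ha : 0 < a) :
    ∫ t in Set.Icc (0 : ℝ) 1, |(a - 1) / ((a - 1) * t + 1)| = |Real.log a| := by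
  rcases le_or_gt 1 a with h | h
  · have heq : Set.EqOn (fun t : ℝ => |(a - 1) / ((a - 1) * t + 1)|)
        (fun t : ℝ => (a - 1) / ((a - 1) * t + 1)) (Set.Icc 0 1) := by
      intro t ht
      exact abs_of_nonneg (div_nonneg (by linarith) (denPos ha ht.1 ht.2).le)
    rw [setIntegral_congr_fun measurableSet_Icc heq, intIcc ha,
      abs_of_nonneg (Real.log_nonneg h)]
  · have heq : Set.EqOn (fun t : ℝ => |(a - 1) / ((a - 1) * t + 1)|)
        (fun t : ℝ => -((a - 1) / ((a - 1) * t + 1))) (Set.Icc 0 1) := by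
      intro t ht
      exact abs_of_nonpos (div_nonpos_of_nonpos_of_nonneg (by linarith) (denPos ha ht.1 ht.2).le)
    rw [setIntegral_congr_fun measurableSet_Icc heq, integral_neg, intIcc ha,
      abs_of_nonpos (Real.log_nonpos ha.le h.le)]

lemma cubeProd (l : ℕ) (h : ℝ → ℝ) :
    ∫ t in (Set.univ.pi fun _ : Fin l => Set.Icc (0 : ℝ) 1), ∏ i, h (t i) =
      (∫ t in Set.Icc (0 : ℝ) 1, h t) ^ l := by
  have hcube : MeasurableSet (Set.univ.pi fun _ : Fin l => Set.Icc (0 : ℝ) 1) :=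
    MeasurableSet.univ_pi fun _ => measurableSet_Icc
  rw [← integral_indicator hcube]
  have hind : (Set.univ.pi fun _ : Fin l => Set.Icc (0 : ℝ) 1).indicator
      (fun t => ∏ i, h (t i)) = fun t => ∏ i, (Set.Icc (0:ℝ) 1).indicator h (t i) := by
    funext t
    by_cases ht : t ∈ Set.univ.pi fun _ : Fin l => Set.Icc (0 : ℝ) 1
    · rw [Set.indicator_of_mem ht]
      exact Finset.prod_congr rfl fun i _ =>
        (Set.indicator_of_mem (ht i (Set.mem_univ i)) h).symm
    · rw [Set.indicator_of_notMem ht]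
      obtain ⟨i, hi⟩ : ∃ i, t i ∉ Set.Icc (0:ℝ) 1 := by
        by_contra hc
        push_neg at hc
        exact ht fun i _ => hc i
      exact (Finset.prod_eq_zero (Finset.mem_univ i)
        (Set.indicator_of_notMem hi h)).symm
  rw [hind]
  simp only [MeasureTheory.volume_pi]
  rw [MeasureTheory.integral_fintype_prod_eq_prod
    (f := fun _ : Fin l => (Set.Icc (0:ℝ) 1).indicator h)]
  rw [integral_indicator measurableSet_Icc, Finset.prod_const, Finset.card_univ,
    Fintype.card_fin]

lemma boundAux {s₀ : ℝ} (hs₀ : 0 < s₀) (l : ℕ) (M : ℝ) :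
    ∃ K : ℝ, 0 ≤ K ∧ ∀ a : ℝ, 0 < a → a ≤ M → a ^ s₀ * |Real.log a| ^ l ≤ K := by
  set M' := max M 1 with hM'
  have hM1 : (1 : ℝ) ≤ M' := le_max_right _ _
  have hlogM : 0 ≤ Real.log M' := Real.log_nonneg hM1
  refine ⟨max (M' ^ s₀ * Real.log M' ^ l) ((2 * l / s₀) ^ l),
    le_trans (by positivity) (le_max_left _ _), fun a ha haM => ?_⟩
  rcases le_or_gt a 1 with h1 | h1
  · refine le_trans ?_ (le_max_right _ _)
    rcases Nat.eq_zero_or_pos l with hl | hl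
    · subst hl
      simpa using Real.rpow_le_one ha.le h1 hs₀.le
    · set r : ℝ := s₀ / (2 * l) with hr
      have hl' : (0 : ℝ) < l := by exact_mod_cast hl
      have hrpos : 0 < r := by positivity
      have hinv : 0 < a⁻¹ := inv_pos.mpr ha
      have hlog : |Real.log a| = Real.log a⁻¹ := by
        rw [Real.log_inv]
        exact abs_of_nonpos (Real.log_nonpos ha.le h1)
      have hkey : Real.log a⁻¹ ≤ (1 / r) * a⁻¹ ^ r := by
        have h2 : Real.log (a⁻¹ ^ r) = r * Real.log a⁻¹ := Real.log_rpow hinv r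
        have h3 : Real.log (a⁻¹ ^ r) ≤ a⁻¹ ^ r :=
          (Real.log_le_sub_one_of_pos (Real.rpow_pos_of_pos hinv r)).trans (by linarith)
        calc Real.log a⁻¹ = (1 / r) * Real.log (a⁻¹ ^ r) := by
              rw [h2]; field_simp
          _ ≤ (1 / r) * a⁻¹ ^ r := by
              exact mul_le_mul_of_nonneg_left h3 (by positivity)
      have h4 : |Real.log a| ^ l ≤ ((1 / r) * a⁻¹ ^ r) ^ l :=
        pow_le_pow_left₀ (abs_nonneg _) (hlog ▸ hkey) l
      have h5 : ((1 / r) * a⁻¹ ^ r) ^ l = (1 / r) ^ l * a⁻¹ ^ (r * l) := by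
        rw [mul_pow, ← Real.rpow_natCast (a⁻¹ ^ r) l, ← Real.rpow_mul hinv.le]
      have hrl : r * l = s₀ / 2 := by
        rw [hr]; field_simp
      have h6 : a⁻¹ ^ (s₀ / 2) = a ^ (-(s₀ / 2)) := by
        rw [← Real.rpow_neg_one a, ← Real.rpow_mul ha.le]; norm_num
      have h7 : a ^ s₀ * a ^ (-(s₀ / 2)) = a ^ (s₀ / 2) := by
        rw [← Real.rpow_add ha]; ring_nf
      have h8 : a ^ (s₀ / 2) ≤ 1 := Real.rpow_le_one ha.le h1 (by positivity)
      have h9 : (1 / r) ^ l = (2 * l / s₀) ^ l := by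
        rw [hr, one_div_div]
      calc a ^ s₀ * |Real.log a| ^ l
          ≤ a ^ s₀ * ((1 / r) ^ l * a ^ (-(s₀ / 2))) := by
            rw [← h6, ← hrl]
            exact mul_le_mul_of_nonneg_left (h4.trans_eq h5) (Real.rpow_nonneg ha.le _)
        _ = (1 / r) ^ l * (a ^ s₀ * a ^ (-(s₀ / 2))) := by ring
        _ = (1 / r) ^ l * a ^ (s₀ / 2) := by rw [h7]
        _ ≤ (2 * l / s₀) ^ l := by
            rw [h9]
            nlinarith [pow_nonneg (by positivity : (0:ℝ) ≤ 2 * l / s₀) l,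
              Real.rpow_nonneg ha.le (s₀ / 2)]
  · refine le_trans ?_ (le_max_left _ _)
    have haM' : a ≤ M' := haM.trans (le_max_left M 1)
    have h2 : a ^ s₀ ≤ M' ^ s₀ := Real.rpow_le_rpow ha.le haM' hs₀.le
    have h3 : |Real.log a| ^ l ≤ Real.log M' ^ l := by
      apply pow_le_pow_left₀ (abs_nonneg _)
      rw [abs_of_nonneg (Real.log_nonneg h1.le)]
      exact Real.log_le_log ha haM'
    exact mul_le_mul h2 h3 (by positivity) (Real.rpow_nonneg (by linarith) _)

lemma measFactor (l : ℕ) (i : Fin l) :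
    Measurable fun p : (ℝ × ℝ) × (Fin l → ℝ) => (p.1.1 - 1) / ((p.1.1 - 1) * p.2 i + 1) := by
  have h1 : Measurable fun p : (ℝ × ℝ) × (Fin l → ℝ) => p.1.1 - 1 :=
    measurable_fst.fst.sub measurable_const
  have h2 : Measurable fun p : (ℝ × ℝ) × (Fin l → ℝ) => p.2 i :=
    (measurable_pi_apply i).comp measurable_snd
  exact h1.div ((h1.mul h2).add measurable_const)

lemma measH (l : ℕ) (s₀ : ℝ) : Measurable (fun p : (ℝ × ℝ) × (Fin l → ℝ) =>
    if p.1.1 = 0 then (0 : ℝ)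
    else p.1.1 ^ s₀ * (∏ i, (p.1.1 - 1) / ((p.1.1 - 1) * p.2 i + 1)) * p.1.2) := by
  apply Measurable.ite
  · exact measurableSet_eq_fun (measurable_fst.fst) measurable_const
  · exact measurable_const
  · apply Measurable.mul
    apply Measurable.mul
    · exact (by measurability : Measurable fun a : ℝ => a ^ s₀).comp measurable_fst.fst
    · apply Finset.measurable_prod
      intro i _
      exact measFactor l i
    · exact measurable_fst.snd

/-- For `a > 0`, `log a = ∫_0^1 (a-1)/((a-1)t+1) dt`; consequently the logarithm factors in
the derivatives of the Igusa zeta function can be rewritten as integrals of rational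
functions over a cube: for compact `C`, `f` continuous, non-negative on `C` and strictly
positive almost everywhere, `g` continuous, `s₀ > 0` and `l ∈ ℕ`,
`∫_{C×[0,1]^l} f(x)^{s₀} ∏ᵢ (f(x)-1)/((f(x)-1)tᵢ+1) g(x) = ∫_C f(x)^{s₀} (log f(x))^l g(x)`. -/
theorem log_as_integral_and_log_powers
    (n l : ℕ) (C : Set (Fin n → ℝ)) (hCcomp : IsCompact C)
    (f g : (Fin n → ℝ) → ℝ)
    (hfc : ContinuousOn f C) (hfnonneg : ∀ x ∈ C, 0 ≤ f x)
    (hfpos : ∀ᵐ x ∂(volume.restrict C), 0 < f x)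
    (hgc : ContinuousOn g C)
    (s₀ : ℝ) (hs₀ : 0 < s₀) :
    (∀ a : ℝ, 0 < a → Real.log a = ∫ t in (0 : ℝ)..1, (a - 1) / ((a - 1) * t + 1)) ∧
    (∫ z in C ×ˢ (Set.univ.pi fun _ : Fin l => Set.Icc (0 : ℝ) 1),
        (if f z.1 = 0 then (0 : ℝ) else
          f z.1 ^ s₀ * (∏ i, (f z.1 - 1) / ((f z.1 - 1) * z.2 i + 1)) * g z.1)) =
      ∫ x in C, if f x = 0 then (0 : ℝ) else f x ^ s₀ * Real.log (f x) ^ l * g x := by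
  refine ⟨fun a ha => logIntegral ha, ?_⟩
  set cube : Set (Fin l → ℝ) := Set.univ.pi fun _ : Fin l => Set.Icc (0 : ℝ) 1 with hcubedef
  have hCm : MeasurableSet C := hCcomp.isClosed.measurableSet
  have hcubem : MeasurableSet cube := MeasurableSet.univ_pi fun _ => measurableSet_Icc
  have hcubec : IsCompact cube := isCompact_univ_pi fun _ => isCompact_Icc
  set μ := volume.restrict C with hμdef
  set ν := volume.restrict cube with hνdef
  set F : (Fin n → ℝ) × (Fin l → ℝ) → ℝ := fun z =>
    if f z.1 = 0 then (0 : ℝ) else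
      f z.1 ^ s₀ * (∏ i, (f z.1 - 1) / ((f z.1 - 1) * z.2 i + 1)) * g z.1 with hFdef
  -- measurability
  have hfm : AEMeasurable f μ := hfc.aemeasurable hCm
  have hgm : AEMeasurable g μ := hgc.aemeasurable hCm
  have hΦ : AEMeasurable (fun z : (Fin n → ℝ) × (Fin l → ℝ) => ((f z.1, g z.1), z.2))
      (μ.prod ν) := by
    refine AEMeasurable.prodMk (AEMeasurable.prodMk ?_ ?_) measurable_snd.aemeasurable
    · exact hfm.comp_quasiMeasurePreserving Measure.quasiMeasurePreserving_fst
    · exact hgm.comp_quasiMeasurePreserving Measure.quasiMeasurePreserving_fst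
  have hFm : AEStronglyMeasurable F (μ.prod ν) :=
    ((measH l s₀).comp_aemeasurable hΦ).aestronglyMeasurable
  -- bounds
  obtain ⟨Mf, hMf⟩ := hCcomp.exists_bound_of_continuousOn hfc
  obtain ⟨Mg, hMg⟩ := hCcomp.exists_bound_of_continuousOn hgc
  have hMf' : ∀ x ∈ C, f x ≤ Mf := fun x hx => (le_abs_self _).trans (hMf x hx)
  have hMg0 : ∀ x ∈ C, (0:ℝ) ≤ Mg → True := fun _ _ _ => trivial
  obtain ⟨K, hK0, hKb⟩ := boundAux hs₀ l Mf
  have hae : ∀ᵐ x ∂μ, x ∈ C ∧ 0 < f x := (ae_restrict_mem hCm).and hfpos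
  -- inner integrability
  have inner_int : ∀ x : Fin n → ℝ, 0 < f x → Integrable (fun t => F (x, t)) ν := by
    intro x hx
    have hne : f x ≠ 0 := hx.ne'
    simp only [hFdef, hne, if_false]
    rw [hνdef]
    apply ContinuousOn.integrableOn_compact hcubec
    apply ContinuousOn.mul (ContinuousOn.mul continuousOn_const ?_) continuousOn_const
    apply continuousOn_finset_prod
    intro i _
    apply ContinuousOn.div continuousOn_const
    · fun_prop
    · intro t ht
      have hti := ht i (Set.mem_univ i)
      exact (denPos hx hti.1 hti.2).ne'
  -- inner value
  have inner_val : ∀ x : Fin n → ℝ, 0 < f x →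
      (∫ t, F (x, t) ∂ν) = f x ^ s₀ * Real.log (f x) ^ l * g x := by
    intro x hx
    have hne : f x ≠ 0 := hx.ne'
    simp only [hFdef, hne, if_false]
    have hre : (fun t : Fin l → ℝ =>
        f x ^ s₀ * (∏ i, (f x - 1) / ((f x - 1) * t i + 1)) * g x) =
        fun t => (f x ^ s₀ * g x) * ∏ i, (f x - 1) / ((f x - 1) * t i + 1) := by
      funext t; ring
    rw [hre, integral_const_mul _ _, hνdef,
      cubeProd l (fun u => (f x - 1) / ((f x - 1) * u + 1)), intIcc hx]
    ring
  -- inner absolute value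
  have inner_abs : ∀ x : Fin n → ℝ, 0 < f x →
      (∫ t, ‖F (x, t)‖ ∂ν) = f x ^ s₀ * |Real.log (f x)| ^ l * |g x| := by
    intro x hx
    have hne : f x ≠ 0 := hx.ne'
    have hre : (fun t : Fin l → ℝ => ‖F (x, t)‖) =
        fun t => (f x ^ s₀ * |g x|) * ∏ i, |(f x - 1) / ((f x - 1) * t i + 1)| := by
      funext t
      simp only [hFdef, hne, if_false, Real.norm_eq_abs, abs_mul, Finset.abs_prod,
        abs_of_nonneg (Real.rpow_nonneg hx.le s₀)]
      ring
    rw [hre, integral_const_mul _ _, hνdef,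
      cubeProd l (fun u => |(f x - 1) / ((f x - 1) * u + 1)|), intIccAbs hx]
    ring
  -- integrability on product
  have hInt : Integrable F (μ.prod ν) := by
    rw [integrable_prod_iff hFm]
    constructor
    · filter_upwards [hae] with x hx using inner_int x hx.2
    · have hfin : IsFiniteMeasure μ := ⟨by
        rw [hμdef, Measure.restrict_apply_univ]; exact hCcomp.measure_lt_top⟩
      apply Integrable.mono' (integrable_const (K * Mg)) hFm.norm.integral_prod_right'
      filter_upwards [hae] with x hx
      obtain ⟨hxC, hxf⟩ := hx
      rw [Real.norm_eq_abs, abs_of_nonneg (integral_nonneg fun t => norm_nonneg _),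
        inner_abs x hxf]
      have h1 : f x ^ s₀ * |Real.log (f x)| ^ l ≤ K := hKb _ hxf (hMf' x hxC)
      have h2 : |g x| ≤ Mg := hMg x hxC
      exact mul_le_mul h1 h2 (abs_nonneg _) hK0
  -- main computation
  calc (∫ z in C ×ˢ cube, F z) = ∫ z, F z ∂(μ.prod ν) := by
        rw [hμdef, hνdef, Measure.prod_restrict, ← Measure.volume_eq_prod]
    _ = ∫ x, (∫ t, F (x, t) ∂ν) ∂μ := integral_prod F hInt
    _ = ∫ x in C, (if f x = 0 then (0 : ℝ) else
          f x ^ s₀ * Real.log (f x) ^ l * g x) := by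
        rw [hμdef]
        apply integral_congr_ae
        filter_upwards [hfpos] with x hxf
        rw [inner_val x hxf, if_neg hxf.ne']
end
end

section
/- Let f ∈ ℚ̄[x_1,…,x_n] be a polynomial with real algebraic coefficients, let C ⊆ ℝ^n be a compact semi-arithmetic set on which f is non-negative, let s_0 be a positive integer, and let l be a non-negative integer. Then the number ∫_C f(x)^{s_0} (log f(x))^l dμ(x) (Lebesgue measure, integrand interpreted as 0 where f vanishes) is a period. -/
open MeasureTheory

noncomputable section

/-- A subset of `ℝ^m` is *semi-arithmetic* if it is a finite union of finite intersections
of sets of the form `{x | f x > 0}` or `{x | f x = 0}`, where the `f` are polynomials in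
`m` variables with real algebraic coefficients. -/
def IsSemiArithmetic {m : ℕ} (C : Set (Fin m → ℝ)) : Prop :=
  ∃ (k : ℕ) (l : Fin k → ℕ) (p : (i : Fin k) → Fin (l i) → MvPolynomial (Fin m) ℝ)
    (b : (i : Fin k) → Fin (l i) → Bool),
    (∀ i j d, IsAlgebraic ℚ ((p i j).coeff d)) ∧
    C = ⋃ i, ⋂ j,
      (if b i j then {x | MvPolynomial.eval x (p i j) = 0}
       else {x | 0 < MvPolynomial.eval x (p i j)})

/-- A real number is a (real) period if it is the value of an absolutely convergent Lebesgue
integral of a rational function with real algebraic coefficients over a semi-arithmetic set. -/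
def IsRealPeriod (x : ℝ) : Prop :=
  ∃ (m : ℕ) (C : Set (Fin m → ℝ)) (p q : MvPolynomial (Fin m) ℝ),
    IsSemiArithmetic C ∧
    (∀ d, IsAlgebraic ℚ (p.coeff d)) ∧ (∀ d, IsAlgebraic ℚ (q.coeff d)) ∧
    IntegrableOn (fun y => MvPolynomial.eval y p / MvPolynomial.eval y q) C volume ∧
    x = ∫ y in C, MvPolynomial.eval y p / MvPolynomial.eval y q

/-- A complex number is a period if its real and imaginary parts are periods. -/
def IsPeriod (z : ℂ) : Prop := IsRealPeriod z.re ∧ IsRealPeriod z.im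

/-! ### Auxiliary lemmas on algebraic numbers and polynomial coefficients -/

lemma algAdd {x y : ℝ} (hx : IsAlgebraic ℚ x) (hy : IsAlgebraic ℚ y) : IsAlgebraic ℚ (x + y) :=
  (isAlgebraic_iff_isIntegral.mpr
    ((isAlgebraic_iff_isIntegral.mp hx).add (isAlgebraic_iff_isIntegral.mp hy)))

lemma algMul {x y : ℝ} (hx : IsAlgebraic ℚ x) (hy : IsAlgebraic ℚ y) : IsAlgebraic ℚ (x * y) :=
  (isAlgebraic_iff_isIntegral.mpr
    ((isAlgebraic_iff_isIntegral.mp hx).mul (isAlgebraic_iff_isIntegral.mp hy)))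

lemma algNeg {x : ℝ} (hx : IsAlgebraic ℚ x) : IsAlgebraic ℚ (-x) :=
  (isAlgebraic_iff_isIntegral.mpr ((isAlgebraic_iff_isIntegral.mp hx).neg))

/-- The predicate that all coefficients of a multivariate polynomial are algebraic over `ℚ`. -/
def AlgCoeffs {σ : Type*} (p : MvPolynomial σ ℝ) : Prop := ∀ d, IsAlgebraic ℚ (p.coeff d)

lemma AlgCoeffs.add {σ : Type*} {p q : MvPolynomial σ ℝ} (hp : AlgCoeffs p) (hq : AlgCoeffs q) :
    AlgCoeffs (p + q) := fun d => by
  classical rw [MvPolynomial.coeff_add]; exact algAdd (hp d) (hq d)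

lemma AlgCoeffs.mul {σ : Type*} {p q : MvPolynomial σ ℝ} (hp : AlgCoeffs p) (hq : AlgCoeffs q) :
    AlgCoeffs (p * q) := fun d => by
  classical
  rw [MvPolynomial.coeff_mul]
  refine Finset.sum_induction _ _ (fun a b ha hb => algAdd ha hb) isAlgebraic_zero ?_
  exact fun x _ => algMul (hp x.1) (hq x.2)

lemma AlgCoeffs.one {σ : Type*} : AlgCoeffs (1 : MvPolynomial σ ℝ) := fun d => by
  classical
  by_cases h : d = 0
  · subst h; rw [MvPolynomial.coeff_zero_one]; exact isAlgebraic_one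
  · rw [MvPolynomial.coeff_one, if_neg (by exact fun hh => h hh.symm)]; exact isAlgebraic_zero

lemma AlgCoeffs.X {σ : Type*} (i : σ) :
    AlgCoeffs (MvPolynomial.X i : MvPolynomial σ ℝ) := fun d => by
  classical
  rw [MvPolynomial.coeff_X']
  split <;> [exact isAlgebraic_one; exact isAlgebraic_zero]

lemma AlgCoeffs.sub {σ : Type*} {p q : MvPolynomial σ ℝ} (hp : AlgCoeffs p) (hq : AlgCoeffs q) :
    AlgCoeffs (p - q) := fun d => by
  rw [sub_eq_add_neg, MvPolynomial.coeff_add, MvPolynomial.coeff_neg]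
  exact algAdd (hp d) (algNeg (hq d))

lemma AlgCoeffs.pow {σ : Type*} {p : MvPolynomial σ ℝ} (hp : AlgCoeffs p) (k : ℕ) :
    AlgCoeffs (p ^ k) := by
  induction k with
  | zero => simpa using AlgCoeffs.one
  | succ k ih => rw [pow_succ]; exact ih.mul hp

lemma AlgCoeffs.prod {σ ι : Type*} (s : Finset ι) (p : ι → MvPolynomial σ ℝ)
    (hp : ∀ i, AlgCoeffs (p i)) : AlgCoeffs (∏ i ∈ s, p i) := by
  classical
  induction s using Finset.induction with
  | empty => simpa using AlgCoeffs.one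
  | @insert a s h ih => rw [Finset.prod_insert h]; exact (hp _).mul ih

lemma AlgCoeffs.rename {σ τ : Type*} {p : MvPolynomial σ ℝ} (hp : AlgCoeffs p)
    {g : σ → τ} (hg : Function.Injective g) : AlgCoeffs (MvPolynomial.rename g p) := fun d => by
  by_cases h : MvPolynomial.coeff d (MvPolynomial.rename g p) = 0
  · rw [h]; exact isAlgebraic_zero
  · obtain ⟨u, hu, -⟩ := MvPolynomial.coeff_rename_ne_zero _ _ _ h
    rw [← hu, MvPolynomial.coeff_rename_mapDomain _ hg]
    exact hp u

/-! ### Single-variable integral computations -/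

lemma den_pos {y t : ℝ} (hy : 0 < y) (ht : t ∈ Set.Icc (0:ℝ) 1) : 0 < (y-1)*t+1 := by
  rcases lt_or_eq_of_le ht.2 with h | h
  · nlinarith [mul_nonneg hy.le ht.1]
  · subst h; nlinarith

lemma term_integrable {y : ℝ} (hy : 0 < y) :
    IntegrableOn (fun t => (y-1)/((y-1)*t+1)) (Set.Ioo (0:ℝ) 1) volume := by
  have : ContinuousOn (fun t => (y-1)/((y-1)*t+1)) (Set.Icc (0:ℝ) 1) := by
    apply ContinuousOn.div continuousOn_const (by fun_prop)
    exact fun t ht => (den_pos hy ht).ne'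
  exact (this.integrableOn_compact isCompact_Icc).mono_set Set.Ioo_subset_Icc_self

lemma term_integral {y : ℝ} (hy : 0 < y) :
    ∫ t in Set.Ioo (0:ℝ) 1, (y-1)/((y-1)*t+1) = Real.log y := by
  have h1 : ∀ t ∈ Set.uIcc (0:ℝ) 1,
      HasDerivAt (fun u => Real.log ((y-1)*u+1)) ((y-1)/((y-1)*t+1)) t := by
    intro t ht
    rw [Set.uIcc_of_le (by norm_num : (0:ℝ) ≤ 1)] at ht
    have hd : 0 < (y-1)*t+1 := den_pos hy ht
    have hlin : HasDerivAt (fun u : ℝ => (y-1)*u+1) (y-1) t := by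
      simpa using ((hasDerivAt_id t).const_mul (y-1)).add_const 1
    simpa [div_eq_mul_inv, mul_comm, Function.comp_def] using (Real.hasDerivAt_log hd.ne').comp t hlin
  have h2 : IntervalIntegrable (fun t => (y-1)/((y-1)*t+1)) volume 0 1 := by
    apply ContinuousOn.intervalIntegrable
    rw [Set.uIcc_of_le (by norm_num : (0:ℝ) ≤ 1)]
    apply ContinuousOn.div continuousOn_const (by fun_prop)
    exact fun t ht => (den_pos hy ht).ne'
  have h3 := intervalIntegral.integral_eq_sub_of_hasDerivAt h1 h2
  rw [intervalIntegral.integral_of_le (by norm_num : (0:ℝ) ≤ 1)] at h3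
  rw [← MeasureTheory.integral_Ioc_eq_integral_Ioo, h3]
  norm_num

lemma term_abs_integral {y : ℝ} (hy : 0 < y) :
    ∫ t in Set.Ioo (0:ℝ) 1, |(y-1)/((y-1)*t+1)| = |Real.log y| := by
  rcases le_or_gt 1 y with h | h
  · have he : Set.EqOn (fun t => |(y-1)/((y-1)*t+1)|) (fun t => (y-1)/((y-1)*t+1))
        (Set.Ioo (0:ℝ) 1) := fun t ht =>
      abs_of_nonneg (div_nonneg (by linarith) (den_pos hy (Set.Ioo_subset_Icc_self ht)).le)
    rw [setIntegral_congr_fun measurableSet_Ioo he, term_integral hy,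
      abs_of_nonneg (Real.log_nonneg h)]
  · have he : Set.EqOn (fun t => |(y-1)/((y-1)*t+1)|) (fun t => -((y-1)/((y-1)*t+1)))
        (Set.Ioo (0:ℝ) 1) := fun t ht =>
      abs_of_nonpos (div_nonpos_of_nonpos_of_nonneg (by linarith)
        (den_pos hy (Set.Ioo_subset_Icc_self ht)).le)
    rw [setIntegral_congr_fun measurableSet_Ioo he, integral_neg, term_integral hy,
      abs_of_nonpos (Real.log_nonpos hy.le h.le)]

lemma abs_log_pow_le {y : ℝ} (hy : 0 < y) (l : ℕ) :
    |Real.log y| ^ l ≤ l.factorial * (y + 1/y) := by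
  have h1 : |Real.log y| ^ l / l.factorial ≤ Real.exp |Real.log y| :=
    Real.pow_div_factorial_le_exp _ (abs_nonneg _) l
  have h2 : Real.exp |Real.log y| ≤ y + 1/y := by
    rcases le_or_gt 0 (Real.log y) with h | h
    · rw [abs_of_nonneg h, Real.exp_log hy]
      have : 0 < 1/y := by positivity
      linarith
    · rw [abs_of_neg h, Real.exp_neg, Real.exp_log hy, one_div]
      linarith [inv_pos.mpr hy]
  have hfac : (0:ℝ) < l.factorial := by positivity
  calc |Real.log y| ^ l = l.factorial * (|Real.log y| ^ l / l.factorial) := by field_simp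
    _ ≤ l.factorial * (Real.exp |Real.log y|) := mul_le_mul_of_nonneg_left h1 hfac.le
    _ ≤ _ := mul_le_mul_of_nonneg_left h2 hfac.le

/-! ### The product with the unit cube -/

lemma castAdd_inj {n l : ℕ} : Function.Injective (Fin.castAdd l : Fin n → Fin (n+l)) :=
  fun a b hab => Fin.ext (by simpa using congrArg Fin.val hab)

lemma IsSemiArithmetic.prod_cube {n l : ℕ} {C : Set (Fin n → ℝ)} (h : IsSemiArithmetic C) :
    IsSemiArithmetic {z : Fin (n+l) → ℝ |
      (fun i => z (Fin.castAdd l i)) ∈ C ∧ ∀ i : Fin l, z (Fin.natAdd n i) ∈ Set.Ioo (0:ℝ) 1} := by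
  obtain ⟨k, L, p, b, halg, hC⟩ := h
  refine ⟨k, fun i => L i + (l + l),
    fun i => Fin.addCases (fun j => MvPolynomial.rename (Fin.castAdd l) (p i j))
      (Fin.addCases (fun r => MvPolynomial.X (Fin.natAdd n r))
        (fun r => 1 - MvPolynomial.X (Fin.natAdd n r))),
    fun i => Fin.addCases (b i) (fun _ => false), ?_, ?_⟩
  · intro i j
    refine Fin.addCases (fun j => ?_) (fun j => ?_) j
    · simp only [Fin.addCases_left]
      exact AlgCoeffs.rename (halg i j) castAdd_inj
    · refine Fin.addCases (fun r => ?_) (fun r => ?_) j <;>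
        simp only [Fin.addCases_left, Fin.addCases_right]
      · exact AlgCoeffs.X _
      · exact AlgCoeffs.sub AlgCoeffs.one (AlgCoeffs.X _)
  · ext z
    simp only [Set.mem_setOf_eq, hC, Set.mem_iUnion, Set.mem_iInter]
    constructor
    · rintro ⟨⟨i, hi⟩, hcube⟩
      refine ⟨i, fun j => ?_⟩
      refine Fin.addCases (fun j => ?_) (fun j => ?_) j
      · simp only [Fin.addCases_left]
        have := hi j
        by_cases hb : b i j <;>
          simp only [hb, if_true, if_false, Set.mem_setOf_eq, MvPolynomial.eval_rename]
            at this ⊢ <;>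
          exact this
      · refine Fin.addCases (fun r => ?_) (fun r => ?_) j <;>
          simp only [Fin.addCases_left, Fin.addCases_right, Bool.false_eq_true, if_false,
            Set.mem_setOf_eq, map_sub, MvPolynomial.eval_X, map_one]
        · exact (hcube r).1
        · linarith [(hcube r).2]
    · rintro ⟨i, hj⟩
      refine ⟨⟨i, fun j => ?_⟩, fun r => ?_⟩
      · have := hj (Fin.castAdd (l + l) j)
        simp only [Fin.addCases_left] at this
        by_cases hb : b i j <;>
          simp only [hb, if_true, if_false, Set.mem_setOf_eq, MvPolynomial.eval_rename]
            at this ⊢ <;>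
          exact this
      · constructor
        · have := hj (Fin.natAdd (L i) (Fin.castAdd l r))
          simp only [Fin.addCases_left, Fin.addCases_right, Bool.false_eq_true, if_false,
            Set.mem_setOf_eq, MvPolynomial.eval_X] at this
          exact this
        · have := hj (Fin.natAdd (L i) (Fin.natAdd l r))
          simp only [Fin.addCases_right, Bool.false_eq_true, if_false,
            Set.mem_setOf_eq, map_sub, MvPolynomial.eval_X, map_one] at this
          linarith

/-! ### Measure-theoretic product structure -/

def prodMeasEquiv (n l : ℕ) : ((Fin n → ℝ) × (Fin l → ℝ)) ≃ᵐ (Fin (n+l) → ℝ) :=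
  (MeasurableEquiv.sumPiEquivProdPi (fun _ : Fin n ⊕ Fin l => ℝ)).symm.trans
    (MeasurableEquiv.piCongrLeft (fun _ => ℝ) finSumFinEquiv)

lemma prodMeasEquiv_mp (n l : ℕ) : MeasurePreserving (prodMeasEquiv n l) volume volume :=
  (volume_measurePreserving_sumPiEquivProdPi_symm _).trans
    (volume_measurePreserving_piCongrLeft _ _)

lemma prodMeasEquiv_left {n l : ℕ} (x : Fin n → ℝ) (t : Fin l → ℝ) (i : Fin n) :
    prodMeasEquiv n l (x, t) (Fin.castAdd l i) = x i := by
  have : Fin.castAdd l i = finSumFinEquiv (Sum.inl i) := rfl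
  rw [this]
  simp [prodMeasEquiv, MeasurableEquiv.trans, MeasurableEquiv.piCongrLeft,
    Equiv.piCongrLeft_apply_apply, MeasurableEquiv.sumPiEquivProdPi, Equiv.sumPiEquivProdPi]
  exact Equiv.piCongrLeft_apply_apply _ _ _ (Sum.inl i)

lemma prodMeasEquiv_right {n l : ℕ} (x : Fin n → ℝ) (t : Fin l → ℝ) (i : Fin l) :
    prodMeasEquiv n l (x, t) (Fin.natAdd n i) = t i := by
  have : Fin.natAdd n i = finSumFinEquiv (Sum.inr i) := rfl
  rw [this]
  simp [prodMeasEquiv, MeasurableEquiv.trans, MeasurableEquiv.piCongrLeft,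
    Equiv.piCongrLeft_apply_apply, MeasurableEquiv.sumPiEquivProdPi, Equiv.sumPiEquivProdPi]
  exact Equiv.piCongrLeft_apply_apply _ _ _ (Sum.inr i)

/-! ### Integrals over the cube of products of one-variable functions -/

lemma cube_indicator_prod {l : ℕ} (h : ℝ → ℝ) (t : Fin l → ℝ) :
    (Set.univ.pi fun _ : Fin l => Set.Ioo (0:ℝ) 1).indicator (fun t => ∏ i, h (t i)) t
      = ∏ i, (Set.Ioo (0:ℝ) 1).indicator h (t i) := by
  classical
  by_cases ht : t ∈ Set.univ.pi fun _ : Fin l => Set.Ioo (0:ℝ) 1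
  · rw [Set.indicator_of_mem ht]
    exact Finset.prod_congr rfl fun i _ => (Set.indicator_of_mem (ht i trivial) h).symm
  · rw [Set.indicator_of_notMem ht]
    rw [Set.mem_univ_pi] at ht; push_neg at ht; obtain ⟨i, hi⟩ := ht
    exact (Finset.prod_eq_zero (Finset.mem_univ i) (Set.indicator_of_notMem hi h)).symm

lemma slice_integrable {l : ℕ} (h : ℝ → ℝ) (hh : IntegrableOn h (Set.Ioo (0:ℝ) 1) volume)
    (c : ℝ) :
    Integrable (fun t : Fin l → ℝ => c * ∏ i, h (t i))
      (volume.restrict (Set.univ.pi fun _ : Fin l => Set.Ioo (0:ℝ) 1)) := by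
  have key : Integrable
      ((Set.univ.pi fun _ : Fin l => Set.Ioo (0:ℝ) 1).indicator fun t => ∏ i, h (t i))
      volume := by
    rw [show ((Set.univ.pi fun _ : Fin l => Set.Ioo (0:ℝ) 1).indicator fun t => ∏ i, h (t i))
        = fun t => ∏ i, (Set.Ioo (0:ℝ) 1).indicator h (t i) from funext (cube_indicator_prod h)]
    exact Integrable.fintype_prod fun _ => (integrable_indicator_iff measurableSet_Ioo).2 hh
  exact ((integrable_indicator_iff
    (MeasurableSet.univ_pi fun _ => measurableSet_Ioo)).1 key).const_mul c

lemma slice_integral {l : ℕ} (h : ℝ → ℝ) (c : ℝ) :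
    ∫ t in (Set.univ.pi fun _ : Fin l => Set.Ioo (0:ℝ) 1), (c * ∏ i, h (t i))
      = c * (∫ u in Set.Ioo (0:ℝ) 1, h u) ^ l := by
  rw [MeasureTheory.integral_const_mul]
  congr 1
  rw [← MeasureTheory.integral_indicator (MeasurableSet.univ_pi fun _ => measurableSet_Ioo),
    show ((Set.univ.pi fun _ : Fin l => Set.Ioo (0:ℝ) 1).indicator fun t => ∏ i, h (t i))
        = fun t => ∏ i, (Set.Ioo (0:ℝ) 1).indicator h (t i) from funext (cube_indicator_prod h),
    MeasureTheory.volume_pi, MeasureTheory.integral_fintype_prod_eq_pow (ι := Fin l) ((Set.Ioo (0:ℝ) 1).indicator h),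
    MeasureTheory.integral_indicator measurableSet_Ioo, Fintype.card_fin]


lemma slice_integral' (l : ℕ) (y c : ℝ) :
    ∫ t in (Set.univ.pi fun _ : Fin l => Set.Ioo (0:ℝ) 1),
        (c * ∏ i, ((y-1)/((y-1) * t i + 1)))
      = c * (∫ u in Set.Ioo (0:ℝ) 1, (y-1)/((y-1) * u + 1)) ^ l :=
  slice_integral (fun u => (y-1)/((y-1) * u + 1)) c

lemma slice_abs_integral' (l : ℕ) (y c : ℝ) :
    ∫ t in (Set.univ.pi fun _ : Fin l => Set.Ioo (0:ℝ) 1),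
        (c * ∏ i, |(y-1)/((y-1) * t i + 1)|)
      = c * (∫ u in Set.Ioo (0:ℝ) 1, |(y-1)/((y-1) * u + 1)|) ^ l :=
  slice_integral (fun u => |(y-1)/((y-1) * u + 1)|) c

lemma Hslice_integrable (l s₀ : ℕ) (hs₀ : 0 < s₀) {y : ℝ} (hy : 0 ≤ y) :
    Integrable (fun t : Fin l → ℝ => y^s₀ * ∏ i, ((y-1)/((y-1) * t i + 1)))
      (volume.restrict (Set.univ.pi fun _ : Fin l => Set.Ioo (0:ℝ) 1)) := by
  rcases hy.lt_or_eq with hy | hy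
  · exact slice_integrable _ (term_integrable hy) _
  · have hz : (fun t : Fin l → ℝ => y^s₀ * ∏ i, ((y-1)/((y-1) * t i + 1)))
        = fun _ => 0 := by
      funext t; rw [← hy, zero_pow hs₀.ne', zero_mul]
    rw [hz]; exact integrable_zero _ _ _

lemma Hslice_integral (l s₀ : ℕ) (hs₀ : 0 < s₀) {y : ℝ} (hy : 0 ≤ y) :
    ∫ t in (Set.univ.pi fun _ : Fin l => Set.Ioo (0:ℝ) 1),
        (y^s₀ * ∏ i, ((y-1)/((y-1) * t i + 1)))
      = if y = 0 then (0:ℝ) else y^s₀ * (Real.log y)^l := by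
  rcases hy.lt_or_eq with hy | hy
  · rw [if_neg hy.ne', slice_integral' l y (y^s₀), term_integral hy]
  · rw [if_pos hy.symm]
    have hz : (fun t : Fin l → ℝ => y^s₀ * ∏ i, ((y-1)/((y-1) * t i + 1)))
        = fun _ => (0:ℝ) := by
      funext t; rw [← hy, zero_pow hs₀.ne', zero_mul]
    rw [hz, integral_zero]

lemma Hslice_norm_integral (l s₀ : ℕ) (hs₀ : 0 < s₀) {y : ℝ} (hy : 0 ≤ y) :
    ∫ t in (Set.univ.pi fun _ : Fin l => Set.Ioo (0:ℝ) 1),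
        ‖y^s₀ * ∏ i, ((y-1)/((y-1) * t i + 1))‖
      = y^s₀ * |Real.log y|^l := by
  have habs : (fun t : Fin l → ℝ => ‖y^s₀ * ∏ i, ((y-1)/((y-1) * t i + 1))‖)
      = fun t => y^s₀ * ∏ i, |(y-1)/((y-1) * t i + 1)| := by
    funext t
    rw [Real.norm_eq_abs, abs_mul, abs_pow, abs_of_nonneg hy, Finset.abs_prod]
  rw [habs]
  rcases hy.lt_or_eq with hy | hy
  · rw [slice_abs_integral' l y (y^s₀), term_abs_integral hy]
  · have hz : (fun t : Fin l → ℝ => y^s₀ * ∏ i, |(y-1)/((y-1) * t i + 1)|)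
        = fun _ => (0:ℝ) := by
      funext t; rw [← hy, zero_pow hs₀.ne', zero_mul]
    rw [hz, integral_zero, ← hy, zero_pow hs₀.ne', zero_mul]

/-- The rational integrand on the product space. -/
def Hfun (n l s₀ : ℕ) (f : MvPolynomial (Fin n) ℝ) : (Fin n → ℝ) × (Fin l → ℝ) → ℝ :=
  fun w => (MvPolynomial.eval w.1 f)^s₀ *
    ∏ i, ((MvPolynomial.eval w.1 f - 1)/((MvPolynomial.eval w.1 f - 1) * w.2 i + 1))

lemma Hfun_slice (n l s₀ : ℕ) (f : MvPolynomial (Fin n) ℝ) (x : Fin n → ℝ) :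
    (fun t => Hfun n l s₀ f (x, t))
      = fun t : Fin l → ℝ => (MvPolynomial.eval x f)^s₀ *
          ∏ i, ((MvPolynomial.eval x f - 1)/((MvPolynomial.eval x f - 1) * t i + 1)) := rfl

lemma Hfun_measurable (n l s₀ : ℕ) (f : MvPolynomial (Fin n) ℝ) :
    Measurable (Hfun n l s₀ f) := by
  have hFc : Continuous fun x : Fin n → ℝ => MvPolynomial.eval x f :=
    MvPolynomial.continuous_eval f
  apply Measurable.mul
  · exact ((hFc.comp continuous_fst).measurable).pow_const s₀
  · apply Finset.measurable_prod
    intro i _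
    exact (((hFc.comp continuous_fst).measurable.sub measurable_const)).div
      ((((hFc.comp continuous_fst).measurable.sub measurable_const).mul
        ((measurable_pi_apply i).comp measurable_snd)).add measurable_const)

lemma bound_aux {y M' : ℝ} (hy : 0 ≤ y) (hM1 : (1:ℝ) ≤ M') (hyM : y ≤ M')
    {s₀ : ℕ} (hs₀ : 0 < s₀) (l : ℕ) :
    y^s₀ * |Real.log y|^l ≤ l.factorial * (M'^(s₀+1) + M'^s₀) := by
  rcases hy.lt_or_eq with hy | hy
  · have h1 : |Real.log y|^l ≤ l.factorial * (y + 1/y) := abs_log_pow_le hy l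
    have hfl : (0:ℝ) ≤ l.factorial := by positivity
    calc y^s₀ * |Real.log y|^l
        ≤ y^s₀ * (l.factorial * (y + 1/y)) :=
          mul_le_mul_of_nonneg_left h1 (pow_nonneg hy.le _)
      _ = l.factorial * (y^(s₀+1) + y^s₀ / y) := by field_simp; ring
      _ ≤ l.factorial * (M'^(s₀+1) + M'^s₀) := by
          have e1 : y^(s₀+1) ≤ M'^(s₀+1) := pow_le_pow_left₀ hy.le hyM _
          have e2 : y^s₀ / y ≤ M'^s₀ := by
            obtain ⟨k, rfl⟩ : ∃ k, s₀ = k + 1 := ⟨s₀ - 1, (Nat.succ_pred_eq_of_pos hs₀).symm⟩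
            rw [pow_succ, mul_div_assoc, div_self hy.ne', mul_one]
            calc y^k ≤ M'^k := pow_le_pow_left₀ hy.le hyM _
              _ ≤ M'^(k+1) := pow_le_pow_right₀ hM1 (Nat.le_succ k)
          exact mul_le_mul_of_nonneg_left (add_le_add e1 e2) hfl
  · rw [← hy, zero_pow hs₀.ne', zero_mul]
    positivity

lemma isRealPeriod_zero : IsRealPeriod 0 := by
  refine ⟨0, ∅, 0, 0,
    ⟨0, Fin.elim0, fun i => Fin.elim0 i, fun i => Fin.elim0 i, fun i => Fin.elim0 i,
      (Set.iUnion_of_empty _).symm⟩,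
    fun d => by rw [MvPolynomial.coeff_zero]; exact isAlgebraic_zero,
    fun d => by rw [MvPolynomial.coeff_zero]; exact isAlgebraic_zero,
    integrableOn_empty, (setIntegral_empty).symm⟩

/-- For a polynomial `f` with real algebraic coefficients, non-negative on a compact
semi-arithmetic set `C`, a positive integer `s₀` and a non-negative integer `l`, the number
`∫_C f^{s₀} (log f)^l dμ` is a period. -/
theorem integral_power_log_is_period
    (n : ℕ) (f : MvPolynomial (Fin n) ℝ)
    (halg : ∀ d, IsAlgebraic ℚ (f.coeff d))
    (C : Set (Fin n → ℝ)) (hCsa : IsSemiArithmetic C) (hCcomp : IsCompact C)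
    (hnonneg : ∀ x ∈ C, 0 ≤ MvPolynomial.eval x f)
    (s₀ : ℕ) (hs₀ : 0 < s₀) (l : ℕ) :
    IsPeriod ((∫ x in C,
      if MvPolynomial.eval x f = 0 then (0 : ℝ)
      else (MvPolynomial.eval x f) ^ s₀ * (Real.log (MvPolynomial.eval x f)) ^ l : ℝ) : ℂ) := by
  classical
  have hFc : Continuous fun x : Fin n → ℝ => MvPolynomial.eval x f :=
    MvPolynomial.continuous_eval f
  have cubeMeas : MeasurableSet (Set.univ.pi fun _ : Fin l => Set.Ioo (0:ℝ) 1) :=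
    MeasurableSet.univ_pi fun _ => measurableSet_Ioo
  have hCm : MeasurableSet C := hCcomp.isClosed.measurableSet
  -- the evaluation identity
  have hGE : ∀ w : (Fin n → ℝ) × (Fin l → ℝ),
      MvPolynomial.eval (prodMeasEquiv n l w)
          ((MvPolynomial.rename (Fin.castAdd l) f) ^ s₀ *
            ∏ _i : Fin l, (MvPolynomial.rename (Fin.castAdd l) f - 1)) /
        MvPolynomial.eval (prodMeasEquiv n l w)
          (∏ i : Fin l, ((MvPolynomial.rename (Fin.castAdd l) f - 1) *
            MvPolynomial.X (Fin.natAdd n i) + 1))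
      = Hfun n l s₀ f w := by
    rintro ⟨x, t⟩
    have hfront : (fun i => prodMeasEquiv n l (x, t) (Fin.castAdd l i)) = x :=
      funext (prodMeasEquiv_left x t)
    have hevalrf : MvPolynomial.eval (prodMeasEquiv n l (x, t))
        (MvPolynomial.rename (Fin.castAdd l) f) = MvPolynomial.eval x f := by
      rw [MvPolynomial.eval_rename]
      show MvPolynomial.eval (fun i => prodMeasEquiv n l (x, t) (Fin.castAdd l i)) f
        = MvPolynomial.eval x f
      rw [hfront]
    rw [map_mul, map_pow, map_prod, hevalrf]
    have h1 : ∀ i : Fin l, i ∈ Finset.univ →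
        MvPolynomial.eval (prodMeasEquiv n l (x, t))
          (MvPolynomial.rename (Fin.castAdd l) f - 1) = MvPolynomial.eval x f - 1 := by
      intro i _
      rw [map_sub, hevalrf, map_one]
    rw [Finset.prod_congr rfl h1, map_prod]
    have h2 : ∀ i : Fin l, i ∈ Finset.univ →
        MvPolynomial.eval (prodMeasEquiv n l (x, t))
          ((MvPolynomial.rename (Fin.castAdd l) f - 1) * MvPolynomial.X (Fin.natAdd n i) + 1)
        = (MvPolynomial.eval x f - 1) * t i + 1 := by
      intro i _
      simp [map_add, map_mul, map_sub, hevalrf, prodMeasEquiv_right]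
    rw [Finset.prod_congr rfl h2, Hfun]
    rw [mul_div_assoc, ← Finset.prod_div_distrib]
  haveI : IsFiniteMeasure (volume.restrict C) :=
    ⟨by rw [Measure.restrict_apply_univ]; exact hCcomp.measure_lt_top⟩
  -- a bound
  obtain ⟨M, hM⟩ := hCcomp.exists_bound_of_continuousOn hFc.continuousOn
  have hM1 : (1:ℝ) ≤ max M 1 := le_max_right _ _
  have hMx : ∀ x ∈ C, MvPolynomial.eval x f ≤ max M 1 := fun x hx =>
    le_trans (le_trans (le_abs_self _) (hM x hx)) (le_max_left _ _)
  -- integrability on the product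
  have hH_int : Integrable (Hfun n l s₀ f)
      ((volume.restrict C).prod
        (volume.restrict (Set.univ.pi fun _ : Fin l => Set.Ioo (0:ℝ) 1))) := by
    have haesm : AEStronglyMeasurable (Hfun n l s₀ f)
        ((volume.restrict C).prod
          (volume.restrict (Set.univ.pi fun _ : Fin l => Set.Ioo (0:ℝ) 1))) :=
      (Hfun_measurable n l s₀ f).aestronglyMeasurable
    refine (integrable_prod_iff haesm).2 ⟨?_, ?_⟩
    · filter_upwards [ae_restrict_mem hCm] with x hx
      rw [Hfun_slice]
      exact Hslice_integrable l s₀ hs₀ (hnonneg x hx)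
    · apply Integrable.mono'
        (integrable_const (l.factorial * ((max M 1)^(s₀+1) + (max M 1)^s₀)))
        haesm.norm.integral_prod_right'
      filter_upwards [ae_restrict_mem hCm] with x hx
      rw [Real.norm_eq_abs, abs_of_nonneg (integral_nonneg fun t => norm_nonneg _)]
      have : ∫ t, ‖Hfun n l s₀ f (x, t)‖
            ∂(volume.restrict (Set.univ.pi fun _ : Fin l => Set.Ioo (0:ℝ) 1))
          = (MvPolynomial.eval x f)^s₀ * |Real.log (MvPolynomial.eval x f)|^l :=
        Hslice_norm_integral l s₀ hs₀ (hnonneg x hx)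
      rw [this]
      exact bound_aux (hnonneg x hx) hM1 (hMx x hx) hs₀ l
  -- Fubini
  have hval : ∫ w, Hfun n l s₀ f w ∂((volume.restrict C).prod
        (volume.restrict (Set.univ.pi fun _ : Fin l => Set.Ioo (0:ℝ) 1)))
      = ∫ x in C, (if MvPolynomial.eval x f = 0 then (0:ℝ)
          else (MvPolynomial.eval x f)^s₀ * (Real.log (MvPolynomial.eval x f))^l) := by
    rw [integral_prod _ hH_int]
    apply integral_congr_ae
    filter_upwards [ae_restrict_mem hCm] with x hx
    exact Hslice_integral l s₀ hs₀ (hnonneg x hx)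
  -- the compact product set
  have hpre : prodMeasEquiv n l ⁻¹' {z : Fin (n+l) → ℝ | (fun i => z (Fin.castAdd l i)) ∈ C ∧
      ∀ i : Fin l, z (Fin.natAdd n i) ∈ Set.Ioo (0:ℝ) 1}
      = C ×ˢ (Set.univ.pi fun _ : Fin l => Set.Ioo (0:ℝ) 1) := by
    ext ⟨x, t⟩
    simp only [Set.mem_preimage, Set.mem_setOf_eq, Set.mem_prod, Set.mem_pi,
      Set.mem_univ, true_implies]
    rw [funext (prodMeasEquiv_left x t)]
    simp_rw [prodMeasEquiv_right]
  have hC'm : MeasurableSet {z : Fin (n+l) → ℝ | (fun i => z (Fin.castAdd l i)) ∈ C ∧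
      ∀ i : Fin l, z (Fin.natAdd n i) ∈ Set.Ioo (0:ℝ) 1} := by
    have : {z : Fin (n+l) → ℝ | (fun i => z (Fin.castAdd l i)) ∈ C ∧
        ∀ i : Fin l, z (Fin.natAdd n i) ∈ Set.Ioo (0:ℝ) 1}
        = ((fun z : Fin (n+l) → ℝ => fun i => z (Fin.castAdd l i)) ⁻¹' C) ∩
          ⋂ i : Fin l, (fun z : Fin (n+l) → ℝ => z (Fin.natAdd n i)) ⁻¹' Set.Ioo (0:ℝ) 1 := by
      ext z
      simp [Set.mem_iInter]
    rw [this]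
    exact ((measurable_pi_lambda _ fun i => measurable_pi_apply _) hCm).inter
      (MeasurableSet.iInter fun i => (measurable_pi_apply _) measurableSet_Ioo)
  have hmp : MeasurePreserving (prodMeasEquiv n l)
      ((volume.prod volume).restrict (C ×ˢ (Set.univ.pi fun _ : Fin l => Set.Ioo (0:ℝ) 1)))
      (volume.restrict {z : Fin (n+l) → ℝ | (fun i => z (Fin.castAdd l i)) ∈ C ∧
        ∀ i : Fin l, z (Fin.natAdd n i) ∈ Set.Ioo (0:ℝ) 1}) := by
    have h0 := (prodMeasEquiv_mp n l).restrict_preimage hC'm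
    rwa [hpre, MeasureTheory.Measure.volume_eq_prod _ _] at h0
  -- transfer of integrability
  have hint' : IntegrableOn
      (fun z => MvPolynomial.eval z
          ((MvPolynomial.rename (Fin.castAdd l) f) ^ s₀ *
            ∏ _i : Fin l, (MvPolynomial.rename (Fin.castAdd l) f - 1)) /
        MvPolynomial.eval z
          (∏ i : Fin l, ((MvPolynomial.rename (Fin.castAdd l) f - 1) *
            MvPolynomial.X (Fin.natAdd n i) + 1)))
      {z : Fin (n+l) → ℝ | (fun i => z (Fin.castAdd l i)) ∈ C ∧
        ∀ i : Fin l, z (Fin.natAdd n i) ∈ Set.Ioo (0:ℝ) 1} volume := by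
    rw [IntegrableOn, ← hmp.integrable_comp_emb (prodMeasEquiv n l).measurableEmbedding]
    have hcomp : ((fun z => MvPolynomial.eval z
          ((MvPolynomial.rename (Fin.castAdd l) f) ^ s₀ *
            ∏ _i : Fin l, (MvPolynomial.rename (Fin.castAdd l) f - 1)) /
        MvPolynomial.eval z
          (∏ i : Fin l, ((MvPolynomial.rename (Fin.castAdd l) f - 1) *
            MvPolynomial.X (Fin.natAdd n i) + 1)))
        ∘ (prodMeasEquiv n l)) = Hfun n l s₀ f := funext hGE
    rw [hcomp, ← Measure.prod_restrict]
    exact hH_int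
  -- transfer of the value
  have hIeq : ∫ z in {z : Fin (n+l) → ℝ | (fun i => z (Fin.castAdd l i)) ∈ C ∧
        ∀ i : Fin l, z (Fin.natAdd n i) ∈ Set.Ioo (0:ℝ) 1},
        MvPolynomial.eval z
          ((MvPolynomial.rename (Fin.castAdd l) f) ^ s₀ *
            ∏ _i : Fin l, (MvPolynomial.rename (Fin.castAdd l) f - 1)) /
        MvPolynomial.eval z
          (∏ i : Fin l, ((MvPolynomial.rename (Fin.castAdd l) f - 1) *
            MvPolynomial.X (Fin.natAdd n i) + 1))
      = ∫ w, Hfun n l s₀ f w ∂((volume.restrict C).prod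
          (volume.restrict (Set.univ.pi fun _ : Fin l => Set.Ioo (0:ℝ) 1))) := by
    have h1 := (prodMeasEquiv_mp n l).setIntegral_preimage_emb
      (prodMeasEquiv n l).measurableEmbedding
      (fun z => MvPolynomial.eval z
          ((MvPolynomial.rename (Fin.castAdd l) f) ^ s₀ *
            ∏ _i : Fin l, (MvPolynomial.rename (Fin.castAdd l) f - 1)) /
        MvPolynomial.eval z
          (∏ i : Fin l, ((MvPolynomial.rename (Fin.castAdd l) f - 1) *
            MvPolynomial.X (Fin.natAdd n i) + 1)))
      {z : Fin (n+l) → ℝ | (fun i => z (Fin.castAdd l i)) ∈ C ∧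
        ∀ i : Fin l, z (Fin.natAdd n i) ∈ Set.Ioo (0:ℝ) 1}
    rw [← h1, hpre]
    rw [show (fun w => MvPolynomial.eval (prodMeasEquiv n l w)
          ((MvPolynomial.rename (Fin.castAdd l) f) ^ s₀ *
            ∏ _i : Fin l, (MvPolynomial.rename (Fin.castAdd l) f - 1)) /
        MvPolynomial.eval (prodMeasEquiv n l w)
          (∏ i : Fin l, ((MvPolynomial.rename (Fin.castAdd l) f - 1) *
            MvPolynomial.X (Fin.natAdd n i) + 1))) = Hfun n l s₀ f from funext hGE]
    rw [MeasureTheory.Measure.volume_eq_prod, ← Measure.prod_restrict]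
  -- conclusion
  constructor
  · rw [Complex.ofReal_re]
    refine ⟨n + l,
      {z : Fin (n+l) → ℝ | (fun i => z (Fin.castAdd l i)) ∈ C ∧
        ∀ i : Fin l, z (Fin.natAdd n i) ∈ Set.Ioo (0:ℝ) 1},
      (MvPolynomial.rename (Fin.castAdd l) f) ^ s₀ *
        ∏ _i : Fin l, (MvPolynomial.rename (Fin.castAdd l) f - 1),
      ∏ i : Fin l, ((MvPolynomial.rename (Fin.castAdd l) f - 1) *
        MvPolynomial.X (Fin.natAdd n i) + 1),
      hCsa.prod_cube, ?_, ?_, hint', ?_⟩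
    · exact fun d => ((AlgCoeffs.rename halg castAdd_inj).pow s₀).mul
        (AlgCoeffs.prod _ _ fun _ => (AlgCoeffs.rename halg castAdd_inj).sub AlgCoeffs.one) d
    · exact fun d => (AlgCoeffs.prod _ _ fun i =>
        (((AlgCoeffs.rename halg castAdd_inj).sub AlgCoeffs.one).mul
          (AlgCoeffs.X _)).add AlgCoeffs.one) d
    · exact (hIeq.trans hval).symm
  · rw [Complex.ofReal_im]
    exact isRealPeriod_zero
end
end
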